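/- Let t ≥ n − 2 and suppose u_t(x) = 1 for some vertex x. Then there exists a walk x = x₁, x₂, …, x_{n−1} in the network (x_j adjacent to x_{j+1} for each j) such that u_t(x_j) = j (mod n) for all 1 ≤ j ≤ n−1. -/

import Mathlib

/- The Greenberg–Hastings update rule on a simple graph `G` with state space `ZMod n`:
`𝒢u(x) = u(x)+1` if `u(x) ≠ 0`; `𝒢u(x) = 1` if `u(x) = 0` and some neighbor is in state `1`;
`𝒢u(x) = 0` otherwise. -/
open Classical in
noncomputable def ghUpdate {V : Type*} (n : ℕ) (G : SimpleGraph V) (u : V → ZMod n) :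
    V → ZMod n :=
  fun x => if u x = 0 then (if ∃ y, G.Adj x y ∧ u y = 1 then 1 else 0) else u x + 1

lemma gh_back {V : Type*} (n : ℕ) (hn : 2 ≤ n) (G : SimpleGraph V)
    (u : V → ZMod n) (x : V) (hx : ghUpdate n G u x = 1) :
    ∃ y, G.Adj x y ∧ u y = 1 := by
  classical
  haveI : Fact (1 < n) := ⟨by omega⟩
  unfold ghUpdate at hx
  by_cases h0 : u x = 0
  · rw [if_pos h0] at hx
    by_cases he : ∃ y, G.Adj x y ∧ u y = 1
    · exact he
    · rw [if_neg he] at hx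
      exact absurd hx.symm one_ne_zero
  · rw [if_neg h0] at hx
    exact absurd (by simpa using hx) h0

lemma gh_forward {V : Type*} (n : ℕ) (hn : 2 ≤ n) (G : SimpleGraph V)
    (u : V → ZMod n) (y : V) (s r : ℕ) (hr : r ≤ n - 1)
    (hy : (ghUpdate n G)^[s] u y = 1) :
    (ghUpdate n G)^[s + r] u y = 1 + (r : ZMod n) := by
  haveI : NeZero n := ⟨by omega⟩
  induction r with
  | zero => simpa using hy
  | succ r ih =>
    have h := ih (by omega)
    have hne : (1 + (r : ZMod n)) ≠ 0 := by
      have h1 : ((r + 1 : ℕ) : ZMod n) ≠ 0 := by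
        rw [Ne, ZMod.natCast_eq_zero_iff]
        intro hd
        have := Nat.le_of_dvd (by omega) hd
        omega
      intro hc
      apply h1
      push_cast
      rw [add_comm]
      exact hc
    rw [show s + (r + 1) = (s + r) + 1 from rfl, Function.iterate_succ_apply',
      ghUpdate]
    simp only [h, if_neg hne]
    push_cast
    ring

open Classical in
noncomputable def ghChain {V : Type*} (n : ℕ) (G : SimpleGraph V) (u : V → ZMod n)
    (t : ℕ) (x : V) : ℕ → V
  | 0 => x
  | k + 1 =>
      if h : ∃ y, G.Adj (ghChain n G u t x k) y ∧ (ghUpdate n G)^[t - (k + 1)] u y = 1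
      then h.choose else ghChain n G u t x k

theorem stmt_15 {V : Type*} [Fintype V] (n : ℕ) (hn : 2 ≤ n) (G : SimpleGraph V)
    (u₀ : V → ZMod n) (t : ℕ) (ht : n - 2 ≤ t) (x : V)
    (hx : (ghUpdate n G)^[t] u₀ x = 1) :
    ∃ xs : ℕ → V, xs 1 = x ∧
      (∀ j, 1 ≤ j → j + 1 ≤ n - 1 → G.Adj (xs j) (xs (j + 1))) ∧
      (∀ j, 1 ≤ j → j ≤ n - 1 → (ghUpdate n G)^[t] u₀ (xs j) = (j : ZMod n)) := by
  classical
  set f : ℕ → V := ghChain n G u₀ t x with hf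
  have key : ∀ k, k ≤ n - 2 → (ghUpdate n G)^[t - k] u₀ (f k) = 1 := by
    intro k
    induction k with
    | zero => intro _; simpa [hf, ghChain] using hx
    | succ k ih =>
      intro hk
      have hval := ih (by omega)
      have hts : t - k = (t - (k + 1)) + 1 := by omega
      rw [hts, Function.iterate_succ_apply'] at hval
      have hex := gh_back n hn G _ _ hval
      have : f (k + 1) = hex.choose := by
        simp only [hf, ghChain, dif_pos hex]; exact dif_pos hex
      rw [this]
      exact hex.choose_spec.2
  have adj : ∀ k, k + 1 ≤ n - 2 → G.Adj (f k) (f (k + 1)) := by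
    intro k hk
    have hval := key k (by omega)
    have hts : t - k = (t - (k + 1)) + 1 := by omega
    rw [hts, Function.iterate_succ_apply'] at hval
    have hex := gh_back n hn G _ _ hval
    have : f (k + 1) = hex.choose := by
      simp only [hf, ghChain, dif_pos hex]; exact dif_pos hex
    rw [this]
    exact hex.choose_spec.1
  refine ⟨fun j => f (j - 1), by simp [hf, ghChain], ?_, ?_⟩
  · intro j hj hj1
    have hk : (j - 1) + 1 ≤ n - 2 := by omega
    have := adj (j - 1) hk
    rwa [show (j - 1) + 1 = (j + 1) - 1 by omega] at this
  · intro j hj hjn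
    have hk : j - 1 ≤ n - 2 := by omega
    have hval := key (j - 1) hk
    have hfor := gh_forward n hn G u₀ (f (j - 1)) (t - (j - 1)) (j - 1)
      (by omega) hval
    rw [show (t - (j - 1)) + (j - 1) = t by omega] at hfor
    rw [hfor]
    have : ((j - 1 + 1 : ℕ) : ZMod n) = (j : ZMod n) := by
      rw [Nat.sub_add_cancel hj]
    push_cast at this
    rw [add_comm]
    exact this
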